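/- Let r₁ < 0, x₀ > 0, y₀ > 0, and U = (0, x₀] × [−y₀, y₀]. Let v : U → ℂ be continuously differentiable and set f(x, y) = x ∂_x v(x, y) + r₁ y ∂_y v(x, y). Suppose s ≤ 0 and there is C ≥ 0 with |f(x, y)| ≤ C x^s for all (x, y) ∈ U. Then for every ε > 0 there is C_ε ≥ 0 such that |v(x, y)| ≤ C_ε x^{s−ε} for all (x, y) ∈ U. -/

import Mathlib

/-- Arithmetic helper: the bound `M + C x^s log(x₀/x)` is dominated by
`(M x₀^(ε-s) + (C/ε) x₀^ε) x^(s-ε)`. -/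
lemma stmt_14_aux (x₀ x s ε M C : ℝ) (hx0 : 0 < x) (hxx : x ≤ x₀) (hε : 0 < ε)
    (hs : s ≤ 0) (hM : 0 ≤ M) (hC : 0 ≤ C) :
    M + C * x ^ s * Real.log (x₀ / x) ≤
      (M * x₀ ^ (ε - s) + C / ε * x₀ ^ ε) * x ^ (s - ε) := by
  have hx₀ : 0 < x₀ := lt_of_lt_of_le hx0 hxx
  have hdiv : (1 : ℝ) ≤ x₀ / x := (one_le_div hx0).2 hxx
  have hdivpos : 0 < x₀ / x := div_pos hx₀ hx0
  have hxs : 0 ≤ C * x ^ s := mul_nonneg hC (Real.rpow_pos_of_pos hx0 s).le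
  have hkey : (x₀ / x) ^ (ε - s) = x₀ ^ (ε - s) * x ^ (s - ε) := by
    rw [Real.div_rpow hx₀.le hx0.le, div_eq_mul_inv, ← Real.rpow_neg hx0.le, neg_sub]
  have hkey2 : x ^ s * (x₀ / x) ^ ε = x₀ ^ ε * x ^ (s - ε) := by
    rw [Real.div_rpow hx₀.le hx0.le, div_eq_mul_inv, ← Real.rpow_neg hx0.le,
      show s - ε = s + (-ε) by ring, Real.rpow_add hx0]
    ring
  -- term 1 : M ≤ M * x₀^(ε-s) * x^(s-ε)
  have h1 : M ≤ M * (x₀ ^ (ε - s) * x ^ (s - ε)) := by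
    have hone : (1 : ℝ) ≤ (x₀ / x) ^ (ε - s) :=
      Real.one_le_rpow hdiv (by linarith)
    rw [hkey] at hone
    calc M = M * 1 := (mul_one M).symm
    _ ≤ M * (x₀ ^ (ε - s) * x ^ (s - ε)) := mul_le_mul_of_nonneg_left hone hM
  -- term 2 : log bound
  have hlog : Real.log (x₀ / x) ≤ (x₀ / x) ^ ε / ε := by
    have h2 : Real.log ((x₀ / x) ^ ε) ≤ (x₀ / x) ^ ε - 1 :=
      Real.log_le_sub_one_of_pos (Real.rpow_pos_of_pos hdivpos ε)
    rw [Real.log_rpow hdivpos] at h2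
    rw [le_div_iff₀ hε]
    nlinarith
  have h2 : C * x ^ s * Real.log (x₀ / x) ≤ C / ε * x₀ ^ ε * x ^ (s - ε) := by
    calc C * x ^ s * Real.log (x₀ / x) ≤ C * x ^ s * ((x₀ / x) ^ ε / ε) :=
          mul_le_mul_of_nonneg_left hlog hxs
    _ = C / ε * (x ^ s * (x₀ / x) ^ ε) := by ring
    _ = C / ε * x₀ ^ ε * x ^ (s - ε) := by rw [hkey2]; ring
  calc M + C * x ^ s * Real.log (x₀ / x)
      ≤ M * (x₀ ^ (ε - s) * x ^ (s - ε)) + C / ε * x₀ ^ ε * x ^ (s - ε) :=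
        add_le_add h1 h2
  _ = (M * x₀ ^ (ε - s) + C / ε * x₀ ^ ε) * x ^ (s - ε) := by ring

theorem stmt_14 (r₁ x₀ y₀ : ℝ) (hr : r₁ < 0) (hx : 0 < x₀) (hy : 0 < y₀)
    (v : ℝ × ℝ → ℂ) (Dv : ℝ × ℝ → (ℝ × ℝ →L[ℝ] ℂ))
    (hdiff : ∀ p ∈ Set.Ioc (0 : ℝ) x₀ ×ˢ Set.Icc (-y₀) y₀, HasFDerivAt v (Dv p) p)
    (hcont : ContinuousOn Dv (Set.Ioc (0 : ℝ) x₀ ×ˢ Set.Icc (-y₀) y₀))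
    (s : ℝ) (hs : s ≤ 0) (C : ℝ) (hC : 0 ≤ C)
    (hf : ∀ p ∈ Set.Ioc (0 : ℝ) x₀ ×ˢ Set.Icc (-y₀) y₀,
      ‖(p.1 : ℂ) * Dv p (1, 0) + (r₁ : ℂ) * (p.2 : ℂ) * Dv p (0, 1)‖ ≤ C * p.1 ^ s) :
    ∀ ε > (0 : ℝ), ∃ Cε : ℝ, 0 ≤ Cε ∧
      ∀ p ∈ Set.Ioc (0 : ℝ) x₀ ×ˢ Set.Icc (-y₀) y₀,
        ‖v p‖ ≤ Cε * p.1 ^ (s - ε) := by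
  -- bound of `v` on the right edge `{x₀} × [-y₀, y₀]`
  obtain ⟨M₀, hM₀⟩ : ∃ M₀, ∀ y ∈ Set.Icc (-y₀) y₀, ‖v (x₀, y)‖ ≤ M₀ := by
    have hcv : ContinuousOn (fun y => v (x₀, y)) (Set.Icc (-y₀) y₀) := by
      intro y hy
      exact (((hdiff (x₀, y) ⟨⟨hx, le_rfl⟩, hy⟩).continuousAt).comp
        ((Continuous.prodMk continuous_const continuous_id).continuousAt)).continuousWithinAt
    exact isCompact_Icc.exists_bound_of_continuousOn hcv
  set M : ℝ := max M₀ 0 with hMdef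
  have hM : 0 ≤ M := le_max_right _ _
  have hM₀' : ∀ y ∈ Set.Icc (-y₀) y₀, ‖v (x₀, y)‖ ≤ M :=
    fun y hy => (hM₀ y hy).trans (le_max_left _ _)
  -- the key transport estimate
  have hmain : ∀ p ∈ Set.Ioc (0 : ℝ) x₀ ×ˢ Set.Icc (-y₀) y₀,
      ‖v p‖ ≤ M + C * p.1 ^ s * Real.log (x₀ / p.1) := by
    rintro ⟨x, y⟩ ⟨⟨hx1, hx2⟩, hy'⟩
    set T : ℝ := Real.log (x₀ / x) with hTdef
    have hdivpos : 0 < x₀ / x := div_pos hx hx1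
    have hT : 0 ≤ T := Real.log_nonneg ((one_le_div hx1).2 hx2)
    set γ : ℝ → ℝ × ℝ := fun t => (x * Real.exp t, y * Real.exp (r₁ * t)) with hγdef
    -- membership of the curve in U
    have hmem : ∀ t ∈ Set.Icc (0:ℝ) T, γ t ∈ Set.Ioc (0 : ℝ) x₀ ×ˢ Set.Icc (-y₀) y₀ := by
      rintro t ⟨ht0, htT⟩
      have hexp1 : Real.exp t ≤ x₀ / x := by
        calc Real.exp t ≤ Real.exp T := Real.exp_le_exp.2 htT
        _ = x₀ / x := Real.exp_log hdivpos
      have hexp2 : Real.exp (r₁ * t) ≤ 1 := by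
        rw [show (1:ℝ) = Real.exp 0 by simp]
        exact Real.exp_le_exp.2 (mul_nonpos_of_nonpos_of_nonneg hr.le ht0)
      refine ⟨⟨mul_pos hx1 (Real.exp_pos t), ?_⟩, ?_⟩
      · calc x * Real.exp t ≤ x * (x₀ / x) := by
              exact mul_le_mul_of_nonneg_left hexp1 hx1.le
        _ = x₀ := by field_simp
      · have habs : |y * Real.exp (r₁ * t)| ≤ y₀ := by
          rw [abs_mul, abs_of_pos (Real.exp_pos _)]
          calc |y| * Real.exp (r₁ * t) ≤ y₀ * 1 := by
                apply mul_le_mul (abs_le.2 hy') hexp2 (Real.exp_pos _).le hy.le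
          _ = y₀ := mul_one y₀
        exact abs_le.1 habs
    -- derivative of v along the curve
    set g' : ℝ → ℂ := fun t =>
      Dv (γ t) (x * Real.exp t, y * (Real.exp (r₁ * t) * r₁)) with hg'def
    have hderiv : ∀ t ∈ Set.Icc (0:ℝ) T,
        HasDerivWithinAt (v ∘ γ) (g' t) (Set.Icc 0 T) t := by
      intro t ht
      have h1 : HasDerivAt (fun t => x * Real.exp t) (x * Real.exp t) t :=
        (Real.hasDerivAt_exp t).const_mul x
      have hlin : HasDerivAt (fun t : ℝ => r₁ * t) r₁ t := by
        simpa using (hasDerivAt_id t).const_mul r₁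
      have h2 : HasDerivAt (fun t => y * Real.exp (r₁ * t))
          (y * (Real.exp (r₁ * t) * r₁)) t :=
        (((Real.hasDerivAt_exp (r₁ * t)).comp t hlin)).const_mul y
      have hγ' : HasDerivAt γ (x * Real.exp t, y * (Real.exp (r₁ * t) * r₁)) t :=
        h1.prodMk h2
      exact ((hdiff (γ t) (hmem t ht)).comp_hasDerivAt t hγ').hasDerivWithinAt
    -- bound on the derivative along the curve
    have hbound : ∀ t ∈ Set.Ico (0:ℝ) T, ‖g' t‖ ≤ C * x ^ s := by
      rintro t ⟨ht0, htT⟩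
      have hmemt := hmem t ⟨ht0, htT.le⟩
      have hq1 : (γ t).1 = x * Real.exp t := rfl
      have hq2 : (γ t).2 = y * Real.exp (r₁ * t) := rfl
      have hvec : (x * Real.exp t, y * (Real.exp (r₁ * t) * r₁))
          = (γ t).1 • ((1:ℝ), (0:ℝ)) + (r₁ * (γ t).2) • ((0:ℝ), (1:ℝ)) := by
        simp [hq1, hq2, Prod.ext_iff]
        ring
      have heq : g' t = ((γ t).1 : ℂ) * Dv (γ t) (1, 0)
          + (r₁ : ℂ) * ((γ t).2 : ℂ) * Dv (γ t) (0, 1) := by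
        rw [hg'def]
        simp only [hvec, map_add, map_smul, Complex.real_smul]
        push_cast
        ring
      have hbd := hf (γ t) hmemt
      rw [← heq] at hbd
      refine hbd.trans ?_
      apply mul_le_mul_of_nonneg_left _ hC
      exact Real.rpow_le_rpow_of_nonpos hx1
        (le_mul_of_one_le_right hx1.le (Real.one_le_exp ht0)) hs
    -- mean value inequality
    have hmvt := norm_image_sub_le_of_norm_deriv_le_segment' hderiv hbound T
      ⟨hT, le_rfl⟩
    have hg0 : (v ∘ γ) 0 = v (x, y) := by simp [hγdef]
    have hgT : ‖(v ∘ γ) T‖ ≤ M := by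
      have hγT : γ T = (x₀, y * Real.exp (r₁ * T)) := by
        simp only [hγdef]
        rw [Real.exp_log hdivpos]
        field_simp
      have hmemT := hmem T ⟨hT, le_rfl⟩
      rw [hγT] at hmemT
      rw [Function.comp_apply, hγT]
      exact hM₀' _ hmemT.2
    calc ‖v (x, y)‖ = ‖(v ∘ γ) T - ((v ∘ γ) T - (v ∘ γ) 0)‖ := by rw [hg0]; ring_nf
    _ ≤ ‖(v ∘ γ) T‖ + ‖(v ∘ γ) T - (v ∘ γ) 0‖ := norm_sub_le _ _
    _ ≤ M + C * x ^ s * (T - 0) := add_le_add hgT hmvt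
    _ = M + C * x ^ s * Real.log (x₀ / x) := by rw [hTdef]; ring
  -- conclude with the arithmetic lemma
  intro ε hε
  refine ⟨M * x₀ ^ (ε - s) + C / ε * x₀ ^ ε, ?_, ?_⟩
  · apply add_nonneg
    · exact mul_nonneg hM (Real.rpow_nonneg hx.le _)
    · exact mul_nonneg (div_nonneg hC hε.le) (Real.rpow_nonneg hx.le _)
  · rintro ⟨x, y⟩ hp
    have h1 := hmain (x, y) hp
    have := stmt_14_aux x₀ x s ε M C hp.1.1 hp.1.2 hε hs hM hC
    exact h1.trans this
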